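/- The string Hamiltonian ℋ = (det H)^{1/2}, with H^{μν} = η^{AB} p_A^μ p_B^ν a 2×2 matrix, satisfies the Noether identity δ^μ_ν ℋ = p^μ_A ∂ℋ/∂p^ν_A (i.e., δ^μ_ν ℋ = (n−1) p^μ_A ∂^A_ν ℋ with n = 2) whenever det H > 0. -/

import Mathlib

attribute [local instance] Matrix.normedAddCommGroup Matrix.normedSpace

private lemma Ssum_expand {m : ℕ} (η : Matrix (Fin m) (Fin m) ℝ) (t : ℝ)
    (a b c d : Fin m → ℝ) :
    ∑ A, ∑ B, η A B * (a A + t * b A) * (c B + t * d B)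
      = (∑ A, ∑ B, η A B * a A * c B)
        + t * ((∑ A, ∑ B, η A B * a A * d B) + (∑ A, ∑ B, η A B * b A * c B))
        + t ^ 2 * (∑ A, ∑ B, η A B * b A * d B) := by
  have h : ∀ A B, η A B * (a A + t * b A) * (c B + t * d B)
      = η A B * a A * c B + t * (η A B * a A * d B)
        + t * (η A B * b A * c B) + t ^ 2 * (η A B * b A * d B) := by
    intros; ring
  simp only [h, Finset.sum_add_distrib, ← Finset.mul_sum]
  ring

private lemma det_aux (Q : Matrix (Fin 2) (Fin 2) ℝ) (μ ν : Fin 2) (t : ℝ) :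
    Matrix.det (Matrix.of fun ρ σ =>
        Q ρ σ + t * ((if σ = ν then Q ρ μ else 0) + (if ρ = ν then Q μ σ else 0))
          + t ^ 2 * (if ρ = ν then (if σ = ν then Q μ μ else 0) else 0))
      = Q.det * (1 + t * (if μ = ν then 1 else 0)) ^ 2 := by
  fin_cases μ <;> fin_cases ν <;>
    simp [Matrix.det_fin_two] <;> ring

/-- the string Hamiltonian ℋ = (det H)^{1/2}, with
H^{μν} = η^{AB} p_A^μ p_B^ν, satisfies the Noether identity
δ^μ_ν ℋ = p^μ_A ∂ℋ/∂p^ν_A whenever det H > 0. -/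
theorem string_hamiltonian_noether
    {m : ℕ}
    (η : Matrix (Fin m) (Fin m) ℝ) (hsymm : η.IsSymm)
    (H : Matrix (Fin m) (Fin 2) ℝ → Matrix (Fin 2) (Fin 2) ℝ)
    (hH : ∀ w μ ν, H w μ ν = ∑ A, ∑ B, η A B * w A μ * w B ν)
    (𝓗 : Matrix (Fin m) (Fin 2) ℝ → ℝ)
    (h𝓗 : ∀ w, 𝓗 w = Real.sqrt ((H w).det))
    (p : Matrix (Fin m) (Fin 2) ℝ)
    (hpos : 0 < (H p).det) :
    ∀ μ ν : Fin 2,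
      (if μ = ν then 𝓗 p else 0)
        = ∑ A, p A μ * (fderiv ℝ 𝓗 p) (Matrix.single A ν (1 : ℝ)) := by
  intro μ ν
  set V : Matrix (Fin m) (Fin 2) ℝ := fun A ρ => if ρ = ν then p A μ else 0 with hV
  -- entries of the deformed matrix
  have hadd : ∀ (t : ℝ) (A : Fin m) (κ : Fin 2),
      (p + t • V) A κ = p A κ + t * (if κ = ν then p A μ else 0) := by
    intro t A κ
    rw [Matrix.add_apply, Matrix.smul_apply, smul_eq_mul]
  have entry : ∀ (t : ℝ) (ρ σ : Fin 2), H (p + t • V) ρ σ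
      = H p ρ σ + t * ((if σ = ν then H p ρ μ else 0) + (if ρ = ν then H p μ σ else 0))
        + t ^ 2 * (if ρ = ν then (if σ = ν then H p μ μ else 0) else 0) := by
    intro t ρ σ
    rw [hH]
    simp only [hadd]
    rw [Ssum_expand η t (fun A => p A ρ) (fun A => if ρ = ν then p A μ else 0)
      (fun B => p B σ) (fun B => if σ = ν then p B μ else 0)]
    by_cases hρ : ρ = ν <;> by_cases hσ : σ = ν <;> simp [hρ, hσ, hH]
  have hdet : ∀ t : ℝ,
      (H (p + t • V)).det = (H p).det * (1 + t * (if μ = ν then 1 else 0)) ^ 2 := by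
    intro t
    have hmat : H (p + t • V) = Matrix.of fun ρ σ =>
        H p ρ σ + t * ((if σ = ν then H p ρ μ else 0) + (if ρ = ν then H p μ σ else 0))
          + t ^ 2 * (if ρ = ν then (if σ = ν then H p μ μ else 0) else 0) := by
      ext ρ σ
      exact entry t ρ σ
    rw [hmat, det_aux]
  -- differentiability of 𝓗 at p
  have h𝓗fun : 𝓗 = fun w => Real.sqrt ((H w).det) := funext h𝓗
  have hcoord : ∀ (A : Fin m) (κ : Fin 2),
      DifferentiableAt ℝ (fun w : Matrix (Fin m) (Fin 2) ℝ => w A κ) p := by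
    intro A κ
    exact (differentiableAt_apply (𝕜 := ℝ) κ (p A)).comp p (differentiableAt_apply (𝕜 := ℝ) A p)
  have hdiffF : DifferentiableAt ℝ (fun w : Matrix (Fin m) (Fin 2) ℝ => (H w).det) p := by
    have hre : (fun w : Matrix (Fin m) (Fin 2) ℝ => (H w).det)
        = fun w => (∑ A, ∑ B, η A B * w A 0 * w B 0) * (∑ A, ∑ B, η A B * w A 1 * w B 1)
          - (∑ A, ∑ B, η A B * w A 0 * w B 1) * (∑ A, ∑ B, η A B * w A 1 * w B 0) := by
      funext w
      rw [Matrix.det_fin_two, hH, hH, hH, hH]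
    rw [hre]
    apply DifferentiableAt.sub <;> apply DifferentiableAt.mul <;>
      · apply DifferentiableAt.fun_sum
        intro A _
        apply DifferentiableAt.fun_sum
        intro B _
        exact ((hcoord A _).const_mul (η A B)).mul (hcoord B _)
  have hdiff𝓗 : DifferentiableAt ℝ 𝓗 p := by
    rw [h𝓗fun]
    exact hdiffF.sqrt (ne_of_gt hpos)
  -- derivative of the curve t ↦ 𝓗 (p + t • V)
  have hcurve : HasDerivAt (fun t : ℝ => 𝓗 (p + t • V)) ((fderiv ℝ 𝓗 p) V) 0 := by
    have h1 : HasDerivAt (fun t : ℝ => p + t • V) V 0 := by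
      have h1' := ((hasDerivAt_id (0 : ℝ)).smul_const V).const_add p
      simp only [id, one_smul] at h1'
      exact h1'
    have h0 : HasFDerivAt 𝓗 (fderiv ℝ 𝓗 p) (p + (0 : ℝ) • V) := by
      simpa using hdiff𝓗.hasFDerivAt
    have h2 := h0.comp_hasDerivAt 0 h1
    exact h2
  -- the model derivative
  have hmodel : HasDerivAt (fun t : ℝ => 𝓗 p * (1 + t * (if μ = ν then (1:ℝ) else 0)))
      (𝓗 p * (if μ = ν then (1:ℝ) else 0)) 0 := by
    have h1 : HasDerivAt (fun t : ℝ => 1 + t * (if μ = ν then (1:ℝ) else 0))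
        (if μ = ν then (1:ℝ) else 0) 0 := by
      simpa using ((hasDerivAt_id (0 : ℝ)).mul_const (if μ = ν then (1:ℝ) else 0)).const_add 1
    simpa using h1.const_mul (𝓗 p)
  -- the two functions agree near 0
  have heq : (fun t : ℝ => 𝓗 (p + t • V))
      =ᶠ[nhds 0] (fun t : ℝ => 𝓗 p * (1 + t * (if μ = ν then (1:ℝ) else 0))) := by
    have hmem : Set.Ioo (-(1:ℝ)) 1 ∈ nhds (0:ℝ) := Ioo_mem_nhds (by norm_num) (by norm_num)
    filter_upwards [hmem] with t ht
    have hpos' : 0 ≤ 1 + t * (if μ = ν then (1:ℝ) else 0) := by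
      split_ifs <;> nlinarith [ht.1, ht.2]
    rw [h𝓗, h𝓗, hdet t, Real.sqrt_mul (le_of_lt hpos), Real.sqrt_sq hpos']
  have hkey : (fderiv ℝ 𝓗 p) V = 𝓗 p * (if μ = ν then (1:ℝ) else 0) :=
    hcurve.unique (hmodel.congr_of_eventuallyEq heq)
  -- the sum on the right-hand side is the derivative in direction V
  have hsum : ∑ A, p A μ * (fderiv ℝ 𝓗 p) (Matrix.single A ν (1:ℝ))
      = (fderiv ℝ 𝓗 p) V := by
    have h1 : ∀ A : Fin m, p A μ * (fderiv ℝ 𝓗 p) (Matrix.single A ν (1:ℝ))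
        = (fderiv ℝ 𝓗 p) (p A μ • Matrix.single A ν (1:ℝ)) := by
      intro A
      rw [map_smul, smul_eq_mul]
    rw [Finset.sum_congr rfl fun A _ => h1 A, ← map_sum]
    congr 1
    ext A' ρ
    simp only [Matrix.sum_apply, Matrix.smul_apply, Matrix.single, Matrix.of_apply,
      smul_eq_mul, mul_ite, mul_one, mul_zero, hV]
    by_cases hρ : ρ = ν
    · subst hρ
      simp
    · have hνρ : ¬ ν = ρ := fun h => hρ h.symm
      simp [hρ, hνρ]
  rw [hsum, hkey]
  split_ifs <;> simp
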